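/- In the tournament T_n (n ≥ 1), every vertex in {1, …, 2^(n−1)} has in-degree 2^(n−1) − 1 and out-degree 2^(n−1), and every vertex in {2^(n−1)+1, …, 2^n} has in-degree 2^(n−1) and out-degree 2^(n−1) − 1. -/

import Mathlib

open scoped Classical

/-- For a nonzero integer `z`, `oddPart z` is `z` divided by the largest power of 2 dividing `z`. -/
def oddPart (z : ℤ) : ℤ := z / 2 ^ (z.natAbs.factorization 2)

/-- The edge relation of the tournament `T n` on `{1, …, 2^n}`. -/
def Dominates (i j : ℤ) : Prop := oddPart (j - i) ≡ 1 [ZMOD 4]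

/-- In-degree of a vertex `v` of `T n`. -/
noncomputable def inDeg (n : ℕ) (v : ℤ) : ℕ :=
  ((Finset.Icc (1 : ℤ) (2 ^ n)).filter (fun u => Dominates u v)).card

/-- Out-degree of a vertex `v` of `T n`. -/
noncomputable def outDeg (n : ℕ) (v : ℤ) : ℕ :=
  ((Finset.Icc (1 : ℤ) (2 ^ n)).filter (fun u => Dominates v u)).card

lemma oddPart_zero : oddPart 0 = 0 := by simp [oddPart]

lemma oddPart_odd (z : ℤ) (hz : z % 2 = 1 ∨ z % 2 = -1) : oddPart z = z := by
  have h2 : ¬ (2 ∣ z) := by omega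
  have : ¬ (2 ∣ z.natAbs) := by
    rw [show (2:ℕ) = (2:ℤ).natAbs from rfl, Int.natAbs_dvd_natAbs]; exact h2
  rw [oddPart, Nat.factorization_eq_zero_of_not_dvd this]
  simp

lemma oddPart_two_mul (z : ℤ) : oddPart (2*z) = oddPart z := by
  rcases eq_or_ne z 0 with rfl | hz
  · simp
  · have hna : (2*z).natAbs = 2 * z.natAbs := by
      simp [Int.natAbs_mul]
    have hf : (2*z).natAbs.factorization 2 = z.natAbs.factorization 2 + 1 := by
      rw [hna, Nat.factorization_mul (by norm_num) (by simpa using hz)]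
      simp [Nat.Prime.factorization (by norm_num : Nat.Prime 2)]
      ring
    rw [oddPart, oddPart, hf, pow_succ, mul_comm ((2:ℤ)^_) 2,
      Int.mul_ediv_mul_of_pos _ _ (by norm_num : (0:ℤ) < 2)]

lemma dominates_iff_of_odd (u v : ℤ) (h : (v - u) % 2 ≠ 0) :
    Dominates u v ↔ (v - u) % 4 = 1 := by
  have := oddPart_odd (v - u) (by omega)
  unfold Dominates Int.ModEq
  rw [this]
  omega

lemma dominates_and_odd_in (u v : ℤ) :
    (Dominates u v ∧ ¬ (v - u) % 2 = 0) ↔ (u - (v-1)) % 4 = 0 := by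
  constructor
  · rintro ⟨hd, ho⟩
    have := (dominates_iff_of_odd u v ho).1 hd
    omega
  · intro h
    have ho : (v - u) % 2 ≠ 0 := by omega
    exact ⟨(dominates_iff_of_odd u v ho).2 (by omega), ho⟩

lemma dominates_and_odd_out (u v : ℤ) :
    (Dominates v u ∧ ¬ (u - v) % 2 = 0) ↔ (u - (v+1)) % 4 = 0 := by
  constructor
  · rintro ⟨hd, ho⟩
    have := (dominates_iff_of_odd v u ho).1 hd
    omega
  · intro h
    have ho : (u - v) % 2 ≠ 0 := by omega
    exact ⟨(dominates_iff_of_odd v u ho).2 (by omega), ho⟩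

lemma count4 (m : ℕ) (c : ℤ) :
    (((Finset.Icc (1:ℤ) (4*m))).filter (fun u => (u - c) % 4 = 0)).card = m := by
  have h : (((Finset.Icc (1:ℤ) (4*m))).filter (fun u => (u - c) % 4 = 0)).card
      = (Finset.Icc (0:ℤ) ((m:ℤ) - 1)).card := by
    apply Finset.card_nbij' (i := fun u => (u - ((c-1) % 4 + 1)) / 4)
        (j := fun k => 4*k + ((c-1) % 4 + 1))
    · intro a ha
      simp only [Finset.coe_filter, Finset.mem_coe, Set.mem_setOf_eq, Finset.mem_filter, Finset.mem_Icc] at ha ⊢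
      omega
    · intro b hb
      simp only [Finset.coe_filter, Finset.mem_coe, Set.mem_setOf_eq, Finset.mem_filter, Finset.mem_Icc] at hb ⊢
      omega
    · intro a ha
      simp only [Finset.coe_filter, Finset.mem_coe, Set.mem_setOf_eq, Finset.mem_filter, Finset.mem_Icc] at ha
      dsimp only
      omega
    · intro b hb
      simp only [Finset.coe_Icc, Set.mem_Icc, Finset.mem_coe, Finset.mem_Icc] at hb
      dsimp only
      omega
  rw [h, Int.card_Icc]
  omega

lemma dominates_double (s w c : ℤ) : Dominates (2*s - c) (2*w - c) ↔ Dominates s w := by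
  unfold Dominates
  rw [show 2*w - c - (2*s - c) = 2*(w - s) by ring, oddPart_two_mul]

lemma filter_double_in (N w c : ℤ) (hc : c = 0 ∨ c = 1) :
    ((Finset.Icc (1:ℤ) (2*N)).filter
      (fun u => Dominates u (2*w - c) ∧ (2*w - c - u) % 2 = 0)).card
    = ((Finset.Icc (1:ℤ) N).filter (fun u => Dominates u w)).card := by
  apply Finset.card_nbij' (i := fun u => (u + c) / 2) (j := fun s => 2*s - c)
  · intro a ha
    simp only [Finset.coe_filter, Finset.mem_coe, Set.mem_setOf_eq, Finset.mem_filter, Finset.mem_Icc] at ha ⊢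
    obtain ⟨h1, h2, h3⟩ := ha
    have he : a = 2 * ((a + c)/2) - c := by omega
    refine ⟨by omega, ?_⟩
    rw [← dominates_double _ _ c, ← he]
    exact h2
  · intro b hb
    simp only [Finset.coe_filter, Finset.mem_coe, Set.mem_setOf_eq, Finset.mem_filter, Finset.mem_Icc] at hb ⊢
    exact ⟨by omega, (dominates_double _ _ c).2 hb.2, by omega⟩
  · intro a ha
    simp only [Finset.coe_filter, Finset.mem_coe, Set.mem_setOf_eq, Finset.mem_filter, Finset.mem_Icc] at ha
    dsimp only
    omega
  · intro b hb
    dsimp only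
    omega

lemma filter_double_out (N w c : ℤ) (hc : c = 0 ∨ c = 1) :
    ((Finset.Icc (1:ℤ) (2*N)).filter
      (fun u => Dominates (2*w - c) u ∧ (u - (2*w - c)) % 2 = 0)).card
    = ((Finset.Icc (1:ℤ) N).filter (fun u => Dominates w u)).card := by
  apply Finset.card_nbij' (i := fun u => (u + c) / 2) (j := fun s => 2*s - c)
  · intro a ha
    simp only [Finset.coe_filter, Finset.mem_coe, Set.mem_setOf_eq, Finset.mem_filter, Finset.mem_Icc] at ha ⊢
    obtain ⟨h1, h2, h3⟩ := ha
    have he : a = 2 * ((a + c)/2) - c := by omega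
    refine ⟨by omega, ?_⟩
    rw [← dominates_double w ((a+c)/2) c, ← he]
    exact h2
  · intro b hb
    simp only [Finset.coe_filter, Finset.mem_coe, Set.mem_setOf_eq, Finset.mem_filter, Finset.mem_Icc] at hb ⊢
    exact ⟨by omega, (dominates_double w b c).2 hb.2, by omega⟩
  · intro a ha
    simp only [Finset.coe_filter, Finset.mem_coe, Set.mem_setOf_eq, Finset.mem_filter, Finset.mem_Icc] at ha
    dsimp only
    omega
  · intro b hb
    dsimp only
    omega


lemma inDeg_rec (m : ℕ) (v : ℤ) :
    inDeg (m+2) v = 2^m + inDeg (m+1) ((v+1)/2) := by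
  set w := (v+1)/2 with hw
  have hc : 2*w - v = 0 ∨ 2*w - v = 1 := by omega
  have hv : v = 2*w - (2*w - v) := by ring
  have he : ((Finset.Icc (1:ℤ) (2^(m+2))).filter
      (fun u => Dominates u v ∧ (v - u) % 2 = 0)).card = inDeg (m+1) w := by
    conv_lhs => rw [hv, show ((2:ℤ)^(m+2)) = 2 * 2^(m+1) by ring]
    exact filter_double_in (2^(m+1)) w (2*w - v) hc
  have ho : ((Finset.Icc (1:ℤ) (2^(m+2))).filter
      (fun u => Dominates u v ∧ ¬ (v - u) % 2 = 0)).card = 2^m := by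
    rw [Finset.filter_congr (fun u _ => dominates_and_odd_in u v),
      show ((2:ℤ)^(m+2)) = 4 * ((2^m : ℕ) : ℤ) by push_cast; ring]
    exact count4 (2^m) (v-1)
  have hs := Finset.card_filter_add_card_filter_not
    (s := (Finset.Icc (1:ℤ) (2^(m+2))).filter (fun u => Dominates u v))
    (p := fun u => (v - u) % 2 = 0)
  rw [Finset.filter_filter, Finset.filter_filter] at hs
  show ((Finset.Icc (1:ℤ) (2^(m+2))).filter (fun u => Dominates u v)).card = _
  omega

lemma outDeg_rec (m : ℕ) (v : ℤ) :
    outDeg (m+2) v = 2^m + outDeg (m+1) ((v+1)/2) := by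
  set w := (v+1)/2 with hw
  have hc : 2*w - v = 0 ∨ 2*w - v = 1 := by omega
  have hv : v = 2*w - (2*w - v) := by ring
  have he : ((Finset.Icc (1:ℤ) (2^(m+2))).filter
      (fun u => Dominates v u ∧ (u - v) % 2 = 0)).card = outDeg (m+1) w := by
    conv_lhs => rw [hv, show ((2:ℤ)^(m+2)) = 2 * 2^(m+1) by ring]
    exact filter_double_out (2^(m+1)) w (2*w - v) hc
  have ho : ((Finset.Icc (1:ℤ) (2^(m+2))).filter
      (fun u => Dominates v u ∧ ¬ (u - v) % 2 = 0)).card = 2^m := by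
    rw [Finset.filter_congr (fun u _ => dominates_and_odd_out u v),
      show ((2:ℤ)^(m+2)) = 4 * ((2^m : ℕ) : ℤ) by push_cast; ring]
    exact count4 (2^m) (v+1)
  have hs := Finset.card_filter_add_card_filter_not
    (s := (Finset.Icc (1:ℤ) (2^(m+2))).filter (fun u => Dominates v u))
    (p := fun u => (u - v) % 2 = 0)
  rw [Finset.filter_filter, Finset.filter_filter] at hs
  show ((Finset.Icc (1:ℤ) (2^(m+2))).filter (fun u => Dominates v u)).card = _
  omega

lemma dominates_self_not (v : ℤ) : ¬ Dominates v v := by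
  unfold Dominates Int.ModEq
  rw [sub_self, oddPart_zero]
  decide

lemma dom12 : Dominates 1 2 := by
  unfold Dominates Int.ModEq
  rw [show (2:ℤ) - 1 = 1 by ring, oddPart_odd 1 (by decide)]

lemma ndom21 : ¬ Dominates 2 1 := by
  unfold Dominates Int.ModEq
  rw [show (1:ℤ) - 2 = -1 by ring, oddPart_odd (-1) (by decide)]
  decide

lemma icc12 : Finset.Icc (1:ℤ) (2^1) = {1, 2} := by
  ext x
  simp [Finset.mem_Icc, Finset.mem_insert]
  omega

lemma main_aux : ∀ m : ℕ, ∀ v : ℤ, v ∈ Finset.Icc (1:ℤ) (2^(m+1)) →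
    (inDeg (m+1) v = if v ≤ 2^m then 2^m - 1 else 2^m) ∧
    (outDeg (m+1) v = if v ≤ 2^m then 2^m else 2^m - 1) := by
  intro m
  induction m with
  | zero =>
    intro v hv
    simp only [Finset.mem_Icc] at hv
    have hv2 : v = 1 ∨ v = 2 := by
      have : (2:ℤ)^1 = 2 := by norm_num
      omega
    unfold inDeg outDeg
    rw [icc12]
    rcases hv2 with rfl | rfl
    · simp [Finset.filter_insert, Finset.filter_singleton,
        dominates_self_not, ndom21, dom12]
    · simp [Finset.filter_insert, Finset.filter_singleton,
        dominates_self_not, ndom21, dom12]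
  | succ k ih =>
    intro v hv
    simp only [Finset.mem_Icc] at hv
    have hp : (2:ℤ)^(k+2) = 2 * 2^(k+1) := by ring
    have hp2 : (2:ℤ)^(k+1) = 2 * 2^k := by ring
    rw [inDeg_rec, outDeg_rec]
    set w := (v+1)/2 with hw
    have hwm : w ∈ Finset.Icc (1:ℤ) (2^(k+1)) := by
      simp only [Finset.mem_Icc]
      omega
    obtain ⟨h1, h2⟩ := ih w hwm
    have hiff : v ≤ 2^(k+1) ↔ w ≤ 2^k := by omega
    have hpn : (2:ℕ)^(k+1) = 2 * 2^k := by ring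
    have hone : 1 ≤ (2:ℕ)^k := Nat.one_le_two_pow
    by_cases hvle : v ≤ 2^(k+1)
    · rw [if_pos hvle, if_pos hvle, h1, h2, if_pos (hiff.1 hvle), if_pos (hiff.1 hvle)]
      constructor <;> omega
    · rw [if_neg hvle, if_neg hvle, h1, h2,
        if_neg (fun h => hvle (hiff.2 h)), if_neg (fun h => hvle (hiff.2 h))]
      constructor <;> omega

theorem stmt_5 (n : ℕ) (hn : 1 ≤ n) :
    (∀ v ∈ Finset.Icc (1 : ℤ) (2 ^ (n - 1)),
      inDeg n v = 2 ^ (n - 1) - 1 ∧ outDeg n v = 2 ^ (n - 1)) ∧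
    (∀ v ∈ Finset.Icc ((2 : ℤ) ^ (n - 1) + 1) (2 ^ n),
      inDeg n v = 2 ^ (n - 1) ∧ outDeg n v = 2 ^ (n - 1) - 1) := by
  obtain ⟨m, rfl⟩ : ∃ m, n = m + 1 := ⟨n - 1, by omega⟩
  simp only [Nat.add_sub_cancel]
  constructor
  · intro v hv
    simp only [Finset.mem_Icc] at hv
    have h1 : (0:ℤ) < 2^m := by positivity
    obtain ⟨ha, hb⟩ := main_aux m v (by simp only [Finset.mem_Icc]; have hp : (2:ℤ)^(m+1) = 2*2^m := (by ring); omega)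
    rw [ha, hb, if_pos hv.2, if_pos hv.2]
    exact ⟨rfl, rfl⟩
  · intro v hv
    simp only [Finset.mem_Icc] at hv
    have h1 : (0:ℤ) < 2^m := by positivity
    have hp : (2:ℤ)^(m+1) = 2*2^m := by ring
    obtain ⟨ha, hb⟩ := main_aux m v (by simp only [Finset.mem_Icc]; omega)
    rw [ha, hb, if_neg (by omega), if_neg (by omega)]
    exact ⟨rfl, rfl⟩
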